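/- arXiv:2101.07068 — 4 statements merged into one kernel-verified Lean document; each statement's English description precedes it below -/
import Mathlib

section
/- Let n ≥ 2 be an integer, ε > 0, δ > 0, c ∈ ℝ, and a > 1. Suppose w : ℝ → ℝ is such that the function v(R) := R^{1−n} w(R) is continuously differentiable on [a, ∞) with v'(R) = c·R^{-n} + o(R^{-n-ε}) as R → ∞, and suppose w(R) = o(R^{1−δ}) as R → ∞. Then w(R) + c/(n−1) = o(R^{-ε}) as R → ∞; i.e. w converges to the constant −c/(n−1) with rate o(R^{-ε}). (This is the order-n induction step for the good field with the flat wave operator: the equation 2R^n ∇_ψ(R^{1−n}∇_T 𝒢_n) ≃ source determines 𝒢_n up to o⁺(1) from the previous order.) -/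
open Filter MeasureTheory Set Asymptotics Topology

/-- Order-`n` induction step for the good field with the flat wave operator.
Let `n ≥ 2`, `ε, δ > 0`, `c ∈ ℝ`, `a > 1`.  If `v(R) := R^{1−n} w(R)` is continuously
differentiable on `[a, ∞)` with `v'(R) = c R^{-n} + o(R^{-n-ε})` as `R → ∞`, and
`w(R) = o(R^{1−δ})`, then `w(R) + c/(n−1) = o(R^{-ε})`, i.e. `w` converges to `−c/(n−1)`
with rate `o(R^{-ε})`. -/
theorem good_field_induction_step (n : ℕ) (hn : 2 ≤ n) (ε δ c a : ℝ)
    (hε : 0 < ε) (hδ : 0 < δ) (ha : 1 < a) (w v' : ℝ → ℝ)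
    (hv : ∀ R ∈ Ici a, HasDerivAt (fun R : ℝ => R ^ (1 - (n : ℝ)) * w R) (v' R) R)
    (hc : ContinuousOn v' (Ici a))
    (ho : (fun R : ℝ => v' R - c * R ^ (-(n : ℝ)))
        =o[atTop] fun R : ℝ => R ^ (-(n : ℝ) - ε))
    (hw : w =o[atTop] fun R : ℝ => R ^ (1 - δ)) :
    (fun R : ℝ => w R + c / ((n : ℝ) - 1)) =o[atTop] fun R : ℝ => R ^ (-ε) := by
  have hn2 : (2 : ℝ) ≤ (n : ℝ) := by exact_mod_cast hn
  have ha0 : (0 : ℝ) < a := by linarith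
  set v : ℝ → ℝ := fun R : ℝ => R ^ (1 - (n : ℝ)) * w R with hvdef
  set g : ℝ → ℝ := fun R : ℝ => v' R - c * R ^ (-(n : ℝ)) with hgdef
  -- Step A : v → 0 at infinity
  have hv0 : Tendsto v atTop (𝓝 0) := by
    have h1 : v =o[atTop] fun R : ℝ => R ^ (1 - (n : ℝ)) * R ^ (1 - δ) :=
      (isBigO_refl (fun R : ℝ => R ^ (1 - (n : ℝ))) atTop).mul_isLittleO hw
    have h2 : v =o[atTop] fun R : ℝ => R ^ (2 - (n : ℝ) - δ) := by
      refine h1.congr' EventuallyEq.rfl ?_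
      filter_upwards [eventually_gt_atTop (0 : ℝ)] with R hR
      rw [← Real.rpow_add hR]
      ring_nf
    have h3 : Tendsto (fun R : ℝ => R ^ (2 - (n : ℝ) - δ)) atTop (𝓝 0) := by
      have := tendsto_rpow_neg_atTop (y := (n : ℝ) + δ - 2) (by linarith)
      simpa [show -((n : ℝ) + δ - 2) = 2 - (n : ℝ) - δ by ring] using this
    exact h2.isBigO.trans_tendsto h3
  -- continuity of g on `[a, ∞)`
  have hgcont : ContinuousOn g (Ici a) := by
    apply hc.sub
    apply continuousOn_const.mul
    intro x hx
    exact (Real.continuousAt_rpow_const x _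
      (Or.inl (ne_of_gt (lt_of_lt_of_le ha0 hx)))).continuousWithinAt
  -- Step B : integrability of g on `(a, ∞)`
  have hgint : IntegrableOn g (Ioi a) := by
    obtain ⟨C, hC0, hCbound⟩ := ho.isBigO.exists_pos
    obtain ⟨b, hb⟩ := eventually_atTop.mp hCbound.bound
    set b' := max b a with hb'def
    have hab' : a ≤ b' := le_max_right b a
    have hb'0 : 0 < b' := lt_of_lt_of_le ha0 hab'
    rw [show Ioi a = Ioc a b' ∪ Ioi b' from (Ioc_union_Ioi_eq_Ioi hab').symm]
    apply IntegrableOn.union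
    · exact ((hgcont.mono (Icc_subset_Ici_self)).integrableOn_Icc).mono_set
        Ioc_subset_Icc_self
    · apply Integrable.mono'
        (((integrableOn_Ioi_rpow_of_lt (show -(n : ℝ) - ε < -1 by linarith)
          hb'0).const_mul C))
      · exact (hgcont.mono fun t ht => le_trans hab' (le_of_lt ht)).aestronglyMeasurable
          measurableSet_Ioi
      · refine (ae_restrict_iff' measurableSet_Ioi).2 (ae_of_all _ fun t ht => ?_)
        have ht0 : 0 < t := hb'0.trans ht
        have := hb t (le_trans (le_max_left b a) ht.le)
        rwa [Real.norm_eq_abs (t ^ _), abs_of_nonneg (Real.rpow_nonneg ht0.le _)] at this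
  -- integrability of v'
  have hv'int : IntegrableOn v' (Ioi a) := by
    have : v' = fun R => g R + c * R ^ (-(n : ℝ)) := by
      funext R; simp [hgdef]
    rw [this]
    exact hgint.add ((integrableOn_Ioi_rpow_of_lt (show -(n : ℝ) < -1 by linarith)
      ha0).const_mul c)
  -- Step C : FTC on `(R, ∞)`
  have key : ∀ R ∈ Ici a, (∫ t in Ioi R, v' t) = -v R := by
    intro R hR
    have := integral_Ioi_of_hasDerivAt_of_tendsto' (f := v) (f' := v') (a := R)
      (fun x hx => hv x (mem_Ici.mpr (le_trans hR hx))) (hv'int.mono_set (Ioi_subset_Ioi hR)) hv0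
    simpa using this
  -- Step E : value of the tail integral of g
  have hE : ∀ R ∈ Ici a, (∫ t in Ioi R, g t)
      = -v R - c / ((n : ℝ) - 1) * R ^ (1 - (n : ℝ)) := by
    intro R hR
    have hR0 : 0 < R := lt_of_lt_of_le ha0 hR
    have hint1 : IntegrableOn g (Ioi R) := hgint.mono_set (Ioi_subset_Ioi hR)
    have hint2 : IntegrableOn (fun t : ℝ => c * t ^ (-(n : ℝ))) (Ioi R) :=
      (integrableOn_Ioi_rpow_of_lt (show -(n : ℝ) < -1 by linarith) hR0).const_mul c
    have hsplit : (∫ t in Ioi R, v' t)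
        = (∫ t in Ioi R, g t) + ∫ t in Ioi R, c * t ^ (-(n : ℝ)) := by
      rw [← integral_add hint1 hint2]
      congr 1; funext t; simp [hgdef]
    have hne : (n : ℝ) - 1 ≠ 0 := by linarith
    have hval : (∫ t in Ioi R, c * t ^ (-(n : ℝ)))
        = c / ((n : ℝ) - 1) * R ^ (1 - (n : ℝ)) := by
      rw [integral_const_mul, integral_Ioi_rpow_of_lt (show -(n : ℝ) < -1 by linarith) hR0,
        show (-(n : ℝ) + 1) = 1 - (n : ℝ) by ring]
      have hne' : (1 : ℝ) - (n : ℝ) ≠ 0 := by linarith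
      field_simp [hne']
      ring
    have hkey := key R hR
    linarith [hsplit, hval, hkey]
  -- Step F : the tail integral of g is o(R^{1-n-ε})
  have hEo : (fun R : ℝ => ∫ t in Ioi R, g t) =o[atTop]
      fun R : ℝ => R ^ (1 - (n : ℝ) - ε) := by
    rw [isLittleO_iff]
    intro η hη
    have hconst : (0 : ℝ) < (n : ℝ) - 1 + ε := by linarith
    have hη' : 0 < η * ((n : ℝ) - 1 + ε) := mul_pos hη hconst
    obtain ⟨b, hb⟩ := eventually_atTop.mp (ho.def hη')
    filter_upwards [eventually_ge_atTop (max a b), eventually_gt_atTop (0 : ℝ)]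
      with R hR hR0
    have hRa : a ≤ R := le_trans (le_max_left a b) hR
    have hRb : b ≤ R := le_trans (le_max_right a b) hR
    have hint1 : IntegrableOn g (Ioi R) := hgint.mono_set (Ioi_subset_Ioi hRa)
    have hint2 : IntegrableOn (fun t : ℝ => η * ((n : ℝ) - 1 + ε) * t ^ (-(n : ℝ) - ε))
        (Ioi R) :=
      (integrableOn_Ioi_rpow_of_lt (show -(n : ℝ) - ε < -1 by linarith) hR0).const_mul _
    have hcalc : ‖∫ t in Ioi R, g t‖ ≤ η * R ^ (1 - (n : ℝ) - ε) := by
      calc ‖∫ t in Ioi R, g t‖ ≤ ∫ t in Ioi R, ‖g t‖ := norm_integral_le_integral_norm _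
        _ ≤ ∫ t in Ioi R, η * ((n : ℝ) - 1 + ε) * t ^ (-(n : ℝ) - ε) := by
            apply setIntegral_mono_on hint1.norm hint2 measurableSet_Ioi
            intro t ht
            have ht0 : 0 < t := hR0.trans ht
            have := hb t (hRb.trans ht.le)
            rwa [Real.norm_eq_abs (t ^ _),
              abs_of_nonneg (Real.rpow_nonneg ht0.le _)] at this
        _ = η * R ^ (1 - (n : ℝ) - ε) := by
            rw [integral_const_mul,
              integral_Ioi_rpow_of_lt (show -(n : ℝ) - ε < -1 by linarith) hR0,
              show (-(n : ℝ) - ε + 1) = 1 - (n : ℝ) - ε by ring]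
            have hne : (1 : ℝ) - (n : ℝ) - ε ≠ 0 := by linarith
            field_simp [hne]
            ring
    calc ‖∫ t in Ioi R, g t‖ ≤ η * R ^ (1 - (n : ℝ) - ε) := hcalc
      _ = η * ‖R ^ (1 - (n : ℝ) - ε)‖ := by
          rw [Real.norm_eq_abs, abs_of_nonneg (Real.rpow_nonneg hR0.le _)]
  -- Step G : conclusion
  have hfinal : (fun R : ℝ => w R + c / ((n : ℝ) - 1)) =ᶠ[atTop]
      fun R : ℝ => -(R ^ ((n : ℝ) - 1) * ∫ t in Ioi R, g t) := by
    filter_upwards [eventually_ge_atTop a] with R hR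
    have hR0 : 0 < R := ha0.trans_le hR
    have hE' := hE R hR
    have hinv : R ^ ((n : ℝ) - 1) * R ^ (1 - (n : ℝ)) = 1 := by
      rw [← Real.rpow_add hR0, show ((n : ℝ) - 1) + (1 - (n : ℝ)) = 0 by ring,
        Real.rpow_zero]
    have hw' : w R = R ^ ((n : ℝ) - 1) * v R := by
      rw [hvdef, show R ^ ((n : ℝ) - 1) * (R ^ (1 - (n : ℝ)) * w R)
        = R ^ ((n : ℝ) - 1) * R ^ (1 - (n : ℝ)) * w R by ring, hinv, one_mul]
    rw [hE', hw',
      show -(R ^ ((n : ℝ) - 1) * (-v R - c / ((n : ℝ) - 1) * R ^ (1 - (n : ℝ))))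
      = R ^ ((n : ℝ) - 1) * v R
        + c / ((n : ℝ) - 1) * (R ^ ((n : ℝ) - 1) * R ^ (1 - (n : ℝ))) by ring,
      hinv, mul_one]
  have hmain : (fun R : ℝ => -(R ^ ((n : ℝ) - 1) * ∫ t in Ioi R, g t)) =o[atTop]
      fun R : ℝ => R ^ (-ε) := by
    have h := ((isBigO_refl (fun R : ℝ => R ^ ((n : ℝ) - 1)) atTop).mul_isLittleO
      hEo).neg_left
    refine h.congr' EventuallyEq.rfl ?_
    filter_upwards [eventually_gt_atTop (0 : ℝ)] with R hR
    rw [← Real.rpow_add hR, show ((n : ℝ) - 1) + (1 - (n : ℝ) - ε) = -ε by ring]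
  exact hmain.congr' hfinal.symm EventuallyEq.rfl
end

section
/- Let n ≥ 2 be an integer, ε > 0, δ > 0, α, β ∈ ℝ, and a > 1. Suppose w : ℝ → ℝ is such that v(R) := R^{1−n} w(R) is continuously differentiable on [a, ∞) with v'(R) = (α + β·log R)·R^{-n} + o(R^{-n-ε}) as R → ∞, and suppose w(R) = o(R^{1−δ}) as R → ∞. Then w(R) + α/(n−1) + β/(n−1)² + (β/(n−1))·log R = o(R^{-ε}) as R → ∞; i.e. w(R) = A + B·log R + o(R^{-ε}) with A = −α/(n−1) − β/(n−1)² and B = −β/(n−1). (This is the order-n induction step for the bad and ugly fields with the flat wave operator: a source carrying one power of log R at order R^{-n} produces exactly one power of log R in the order-n coefficient, with the stated coefficients.) -/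
open Filter MeasureTheory Set Asymptotics

/-- Order-`n` induction step for the bad and ugly fields with the flat wave operator.
Let `n ≥ 2`, `ε, δ > 0`, `α, β ∈ ℝ`, `a > 1`.  If `v(R) := R^{1−n} w(R)` is continuously
differentiable on `[a, ∞)` with `v'(R) = (α + β log R) R^{-n} + o(R^{-n-ε})` as `R → ∞`,
and `w(R) = o(R^{1−δ})`, then
`w(R) + α/(n−1) + β/(n−1)² + (β/(n−1)) log R = o(R^{-ε})`,
i.e. `w(R) = A + B log R + o(R^{-ε})` with `A = −α/(n−1) − β/(n−1)²`, `B = −β/(n−1)`. -/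
theorem bad_ugly_field_induction_step (n : ℕ) (hn : 2 ≤ n) (ε δ α β a : ℝ)
    (hε : 0 < ε) (hδ : 0 < δ) (ha : 1 < a) (w v' : ℝ → ℝ)
    (hv : ∀ R ∈ Ici a, HasDerivAt (fun R : ℝ => R ^ (1 - (n : ℝ)) * w R) (v' R) R)
    (hc : ContinuousOn v' (Ici a))
    (ho : (fun R : ℝ => v' R - (α + β * Real.log R) * R ^ (-(n : ℝ)))
        =o[atTop] fun R : ℝ => R ^ (-(n : ℝ) - ε))
    (hw : w =o[atTop] fun R : ℝ => R ^ (1 - δ)) :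
    (fun R : ℝ => w R + α / ((n : ℝ) - 1) + β / ((n : ℝ) - 1) ^ 2 +
        (β / ((n : ℝ) - 1)) * Real.log R)
      =o[atTop] fun R : ℝ => R ^ (-ε) := by
  have hn2 : (2 : ℝ) ≤ (n : ℝ) := by exact_mod_cast hn
  have hn1 : (1 : ℝ) < (n : ℝ) := by linarith
  have hn1' : (n : ℝ) - 1 ≠ 0 := by linarith
  set A : ℝ := -(α / ((n : ℝ) - 1)) - β / ((n : ℝ) - 1) ^ 2 with hA
  set B : ℝ := -(β / ((n : ℝ) - 1)) with hB
  set F : ℝ → ℝ := fun R => R ^ (1 - (n : ℝ)) * (A + B * Real.log R) with hFdef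
  -- derivative of F
  have hF : ∀ R : ℝ, 0 < R → HasDerivAt F ((α + β * Real.log R) * R ^ (-(n : ℝ))) R := by
    intro R hR
    have h1 : HasDerivAt (fun R : ℝ => R ^ (1 - (n : ℝ)))
        ((1 - (n : ℝ)) * R ^ (1 - (n : ℝ) - 1)) R :=
      Real.hasDerivAt_rpow_const (Or.inl hR.ne')
    have h2 : HasDerivAt (fun R : ℝ => A + B * Real.log R) (B / R) R := by
      simpa [div_eq_mul_inv, mul_comm] using
        ((Real.hasDerivAt_log hR.ne').const_mul B).const_add A
    have := h1.mul h2
    refine this.congr_deriv ?_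
    rw [show (1 - (n : ℝ) - 1) = -(n : ℝ) from by ring,
      show (1 - (n : ℝ)) = -(n : ℝ) + 1 from by ring, Real.rpow_add hR, Real.rpow_one]
    simp only [hA, hB]
    field_simp
    ring
  set g : ℝ → ℝ := fun R => R ^ (1 - (n : ℝ)) * w R - F R with hgdef
  set g' : ℝ → ℝ := fun R => v' R - (α + β * Real.log R) * R ^ (-(n : ℝ)) with hg'def
  have hapos : 0 < a := lt_trans one_pos ha
  have hg : ∀ R ∈ Ici a, HasDerivAt g (g' R) R := fun R hR =>
    (hv R hR).sub (hF R (lt_of_lt_of_le hapos (mem_Ici.mp hR)))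
  have hgc : ContinuousOn g' (Ici a) := by
    apply hc.sub
    apply ContinuousOn.mul
    · exact (continuousOn_const.add (continuousOn_const.mul
        (Real.continuousOn_log.mono (fun x hx => by
          simp only [mem_compl_iff, mem_singleton_iff]
          exact ne_of_gt (lt_of_lt_of_le hapos hx)))))
    · exact fun x hx => (Real.continuousAt_rpow_const x _ (Or.inl
        (ne_of_gt (lt_of_lt_of_le hapos hx)))).continuousWithinAt
  -- g tends to 0
  have hglim : Tendsto g atTop (nhds 0) := by
    have hv0 : Tendsto (fun R : ℝ => R ^ (1 - (n : ℝ)) * w R) atTop (nhds 0) := by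
      have h1 : (fun R : ℝ => R ^ (1 - (n : ℝ)) * w R)
          =O[atTop] fun R => R ^ (1 - (n : ℝ)) * R ^ (1 - δ) :=
        (isBigO_refl (fun R : ℝ => R ^ (1 - (n : ℝ))) atTop).mul hw.isBigO
      have h2 : (fun R : ℝ => R ^ (1 - (n : ℝ)) * R ^ (1 - δ))
          =ᶠ[atTop] fun R => R ^ (2 - (n : ℝ) - δ) := by
        filter_upwards [eventually_gt_atTop 0] with R hR
        rw [← Real.rpow_add hR]
        ring_nf
      have h3 : Tendsto (fun R : ℝ => R ^ (2 - (n : ℝ) - δ)) atTop (nhds 0) := by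
        have := tendsto_rpow_neg_atTop (y := (n : ℝ) + δ - 2) (by linarith)
        rw [show -((n : ℝ) + δ - 2) = 2 - (n : ℝ) - δ from by ring] at this
        exact this
      exact (h1.trans h2.isBigO).trans_tendsto h3
    have hF0 : Tendsto F atTop (nhds 0) := by
      have t1 : Tendsto (fun R : ℝ => R ^ (1 - (n : ℝ)) * A) atTop (nhds 0) := by
        have := (tendsto_rpow_neg_atTop (y := (n : ℝ) - 1) (by linarith)).mul_const A
        rw [show -((n : ℝ) - 1) = 1 - (n : ℝ) from by ring] at this
        simpa using this
      have t2 : Tendsto (fun R : ℝ => R ^ (1 - (n : ℝ)) * (B * Real.log R)) atTop (nhds 0) := by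
        have hlog : (fun R : ℝ => B * Real.log R) =O[atTop]
            fun R => R ^ (((n : ℝ) - 1) / 2) :=
          ((isLittleO_log_rpow_atTop (by linarith : (0:ℝ) < ((n : ℝ) - 1) / 2)).isBigO).const_mul_left B
        have h1 : (fun R : ℝ => R ^ (1 - (n : ℝ)) * (B * Real.log R))
            =O[atTop] fun R => R ^ (1 - (n : ℝ)) * R ^ (((n : ℝ) - 1) / 2) :=
          (isBigO_refl (fun R : ℝ => R ^ (1 - (n : ℝ))) atTop).mul hlog
        have h2 : (fun R : ℝ => R ^ (1 - (n : ℝ)) * R ^ (((n : ℝ) - 1) / 2))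
            =ᶠ[atTop] fun R => R ^ ((1 - (n : ℝ)) / 2) := by
          filter_upwards [eventually_gt_atTop 0] with R hR
          rw [← Real.rpow_add hR]
          ring_nf
        have h3 : Tendsto (fun R : ℝ => R ^ ((1 - (n : ℝ)) / 2)) atTop (nhds 0) := by
          have := tendsto_rpow_neg_atTop (y := ((n : ℝ) - 1) / 2) (by linarith)
          rw [show -(((n : ℝ) - 1) / 2) = (1 - (n : ℝ)) / 2 from by ring] at this
          exact this
        exact (h1.trans h2.isBigO).trans_tendsto h3
      have := t1.add t2
      rw [add_zero] at this
      exact this.congr (fun R => by rw [hFdef]; ring)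
    simpa using hv0.sub hF0
  -- main estimate
  rw [isLittleO_iff]
  intro c hc0
  have hne : 0 < (n : ℝ) + ε - 1 := by linarith
  have hc1 : (0 : ℝ) < c * ((n : ℝ) + ε - 1) := mul_pos hc0 hne
  rw [isLittleO_iff] at ho
  obtain ⟨R₀, hR₀⟩ := (eventually_atTop.mp ((ho hc1).and (eventually_ge_atTop a)))
  set R₁ := max R₀ a with hR₁
  have hR₁a : a ≤ R₁ := le_max_right _ _
  have key : ∀ R, R₁ ≤ R → ‖g R‖ ≤ c * R ^ (1 - (n : ℝ) - ε) := by
    intro R hR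
    have hRa : a ≤ R := le_trans hR₁a hR
    have hRpos : 0 < R := lt_of_lt_of_le hapos hRa
    have bound : ∀ S, R ≤ S → ‖g S - g R‖ ≤ c * R ^ (1 - (n : ℝ) - ε) := by
      intro S hS
      have hsub : Icc R S ⊆ Ici a := fun x hx => le_trans hRa hx.1
      have hint : ∀ t ∈ uIcc R S, HasDerivAt g (g' t) t := by
        intro t ht
        rw [uIcc_of_le hS] at ht
        exact hg t (hsub ht)
      have hinteg : IntervalIntegrable g' volume R S := by
        apply (hgc.mono _).intervalIntegrable
        rw [uIcc_of_le hS]; exact hsub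
      have heq : ∫ t in R..S, g' t = g S - g R :=
        intervalIntegral.integral_eq_sub_of_hasDerivAt hint hinteg
      rw [← heq]
      have habs : |∫ t in R..S, g' t| ≤ ∫ t in R..S, |g' t| :=
        intervalIntegral.abs_integral_le_integral_abs hS
      have hcomp : ∫ t in R..S, |g' t| ≤ ∫ t in R..S, c * ((n:ℝ) + ε - 1) * t ^ (-(n : ℝ) - ε) := by
        apply intervalIntegral.integral_mono_on hS
        · exact hinteg.abs
        · apply ContinuousOn.intervalIntegrable
          apply ContinuousOn.mul continuousOn_const
          intro x hx
          rw [uIcc_of_le hS] at hx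
          exact (Real.continuousAt_rpow_const x _ (Or.inl
            (ne_of_gt (lt_of_lt_of_le hapos (hsub hx))))).continuousWithinAt
        · intro t ht
          have h := (hR₀ t (le_trans (le_max_left _ _) (le_trans hR ht.1))).1
          calc |g' t| = ‖g' t‖ := rfl
            _ ≤ c * ((n:ℝ)+ε-1) * ‖t ^ (-(n : ℝ) - ε)‖ := h
            _ = c * ((n:ℝ)+ε-1) * t ^ (-(n : ℝ) - ε) := by
                rw [Real.norm_eq_abs, abs_of_pos (Real.rpow_pos_of_pos
                  (lt_of_lt_of_le hapos (le_trans hRa ht.1)) _)]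
      have hval : ∫ t in R..S, c * ((n:ℝ)+ε-1) * t ^ (-(n : ℝ) - ε)
          = c * ((n:ℝ)+ε-1) * ((S ^ (-(n:ℝ) - ε + 1) - R ^ (-(n:ℝ) - ε + 1)) / (-(n:ℝ) - ε + 1)) := by
        rw [intervalIntegral.integral_const_mul, integral_rpow]
        right
        constructor
        · intro hcon; linarith [hcon]
        · rw [uIcc_of_le hS]
          intro hcon
          exact absurd hcon.1 (not_le.mpr (lt_of_lt_of_le hapos hRa))
      have harith : ∀ x y : ℝ, c * ((n:ℝ)+ε-1) * ((y - x) / (-(n:ℝ) - ε + 1)) = c * (x - y) := by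
        intro x y
        rw [show (-(n:ℝ) - ε + 1) = -((n:ℝ) + ε - 1) from by ring, div_neg, mul_neg,
          mul_assoc, mul_comm ((n:ℝ)+ε-1), div_mul_cancel₀ _ hne.ne']
        ring
      rw [Real.norm_eq_abs]
      calc |∫ t in R..S, g' t| ≤ ∫ t in R..S, |g' t| := habs
        _ ≤ _ := hcomp
        _ = c * ((n:ℝ)+ε-1) * ((S ^ (-(n:ℝ) - ε + 1) - R ^ (-(n:ℝ) - ε + 1)) / (-(n:ℝ) - ε + 1)) := hval
        _ = c * (R ^ (-(n:ℝ) - ε + 1) - S ^ (-(n:ℝ) - ε + 1)) := harith _ _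
        _ ≤ c * R ^ (1 - (n:ℝ) - ε) := by
            have hSpos := Real.rpow_pos_of_pos (lt_of_lt_of_le hRpos hS) (-(n:ℝ) - ε + 1)
            have h2 : (-(n:ℝ) - ε + 1) = 1 - (n:ℝ) - ε := by ring
            rw [h2] at hSpos ⊢
            have : R ^ (1 - (n:ℝ) - ε) - S ^ (1 - (n:ℝ) - ε) ≤ R ^ (1 - (n:ℝ) - ε) := by linarith
            exact mul_le_mul_of_nonneg_left this hc0.le
    have hlim : Tendsto (fun S => ‖g S - g R‖) atTop (nhds ‖(0:ℝ) - g R‖) :=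
      (Tendsto.sub hglim tendsto_const_nhds).norm
    have : ‖(0:ℝ) - g R‖ ≤ c * R ^ (1 - (n : ℝ) - ε) :=
      le_of_tendsto hlim (eventually_atTop.mpr ⟨R, bound⟩)
    simpa using this
  -- conclude
  filter_upwards [eventually_ge_atTop R₁, eventually_ge_atTop a] with R hR hRa
  have hRpos : 0 < R := lt_of_lt_of_le hapos hRa
  have hgR := key R hR
  have hfg : w R + α / ((n : ℝ) - 1) + β / ((n : ℝ) - 1) ^ 2 + (β / ((n : ℝ) - 1)) * Real.log R
      = R ^ ((n:ℝ) - 1) * g R := by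
    have hgr : g R = R ^ (1 - (n : ℝ)) * (w R - A - B * Real.log R) := by
      simp only [hgdef, hFdef]
      ring
    rw [hgr, ← mul_assoc, ← Real.rpow_add hRpos,
      show ((n:ℝ) - 1) + (1 - (n:ℝ)) = 0 from by ring, Real.rpow_zero, one_mul]
    simp only [hA, hB]
    ring
  rw [hfg]
  rw [Real.norm_eq_abs, abs_mul, abs_of_pos (Real.rpow_pos_of_pos hRpos _)]
  calc R ^ ((n:ℝ)-1) * |g R| ≤ R ^ ((n:ℝ)-1) * (c * R ^ (1 - (n : ℝ) - ε)) :=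
        mul_le_mul_of_nonneg_left hgR (Real.rpow_pos_of_pos hRpos _).le
    _ = c * R ^ (-ε) := by
        rw [mul_comm, mul_assoc, ← Real.rpow_add hRpos,
          show (1 - (n:ℝ) - ε + ((n:ℝ) - 1)) = -ε from by ring]
    _ ≤ c * ‖R ^ (-ε)‖ := by
        rw [Real.norm_eq_abs, abs_of_pos (Real.rpow_pos_of_pos hRpos _)]
end

section
/- Let n ≥ 2 be an integer, P a natural number, c_0, …, c_P ∈ ℝ, ε > 0, δ > 0, and a > 1. Suppose w : ℝ → ℝ is such that v(R) := R^{1−n} w(R) is continuously differentiable on [a, ∞) with v'(R) = Σ_{p=0}^{P} c_p (log R)^p R^{-n} + o(R^{-n-ε}) as R → ∞, and suppose w(R) = o(R^{1−δ}) as R → ∞. Then, setting d_i := −Σ_{p=i}^{P} (p!/i!)·c_p/(n−1)^{p−i+1} for 0 ≤ i ≤ P, one has w(R) − Σ_{i=0}^{P} d_i (log R)^i = o(R^{-ε}) as R → ∞. (This is the order-n induction step for all three fields with a general asymptotically flat wave operator: a polyhomogeneous source Σ_p (log R)^p Ω_{n−1,p} at order R^{-n−1} determines an order-n coefficient that is a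 polynomial of the same degree in log R, with the stated coefficients.) -/
open Filter MeasureTheory Set Asymptotics

noncomputable def gisD (n P : ℕ) (c : ℕ → ℝ) (i : ℕ) : ℝ :=
  -(∑ p ∈ Finset.Icc i P,
      (p.factorial : ℝ) / (i.factorial : ℝ) * c p / ((n : ℝ) - 1) ^ (p - i + 1))

lemma gis_coeff (n : ℕ) (hn : 2 ≤ n) (P : ℕ) (c : ℕ → ℝ) (j : ℕ) (hj : j ≤ P) :
    (1 - (n : ℝ)) * gisD n P c j + ((j : ℝ) + 1) * gisD n P c (j+1) = c j := by
  simp only [gisD]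
  have hm : ((n : ℝ) - 1) ≠ 0 := by
    have : (2:ℝ) ≤ n := by exact_mod_cast hn
    linarith
  have h1 : (1 - (n : ℝ)) * (-(∑ p ∈ Finset.Icc j P,
        (p.factorial : ℝ) / (j.factorial : ℝ) * c p / ((n : ℝ) - 1) ^ (p - j + 1)))
      = ∑ p ∈ Finset.Icc j P,
        (p.factorial : ℝ) / (j.factorial : ℝ) * c p / ((n : ℝ) - 1) ^ (p - j) := by
    rw [show ∀ X : ℝ, (1 - (n : ℝ)) * (-X) = ((n:ℝ) - 1) * X from fun X => by ring,
      Finset.mul_sum]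
    refine Finset.sum_congr rfl fun p hp => ?_
    rw [pow_succ]
    field_simp
  have h2 : ((j : ℝ) + 1) * (-(∑ p ∈ Finset.Icc (j+1) P,
        (p.factorial : ℝ) / ((j+1).factorial : ℝ) * c p / ((n : ℝ) - 1) ^ (p - (j+1) + 1)))
      = -∑ p ∈ Finset.Icc (j+1) P,
        (p.factorial : ℝ) / (j.factorial : ℝ) * c p / ((n : ℝ) - 1) ^ (p - j) := by
    rw [mul_neg, neg_inj, Finset.mul_sum]
    refine Finset.sum_congr rfl fun p hp => ?_
    have hpj : j + 1 ≤ p := (Finset.mem_Icc.1 hp).1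
    have he : p - (j+1) + 1 = p - j := by omega
    rw [he, Nat.factorial_succ]
    have hjf : (j.factorial : ℝ) ≠ 0 := Nat.cast_ne_zero.2 j.factorial_ne_zero
    have : ((j:ℝ)+1) ≠ 0 := by positivity
    push_cast
    field_simp
  rw [h1, h2]
  have hins : Finset.Icc j P = insert j (Finset.Icc (j+1) P) := by
    ext x; simp only [Finset.mem_Icc, Finset.mem_insert]; omega
  rw [hins, Finset.sum_insert (by simp)]
  have hjf : (j.factorial : ℝ) ≠ 0 := Nat.cast_ne_zero.2 j.factorial_ne_zero
  simp [Nat.sub_self, div_self hjf]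

lemma gis_sum (n : ℕ) (hn : 2 ≤ n) (P : ℕ) (c : ℕ → ℝ) (L : ℝ) :
    (1 - (n:ℝ)) * (∑ i ∈ Finset.range (P+1), gisD n P c i * L^i)
      + ∑ i ∈ Finset.range (P+1), (i:ℝ) * gisD n P c i * L^(i-1)
    = ∑ p ∈ Finset.range (P+1), c p * L^p := by
  rw [Finset.mul_sum, Finset.sum_range_succ
      (fun i => (1-(n:ℝ)) * (gisD n P c i * L^i)),
    Finset.sum_range_succ' (fun i => (i:ℝ) * gisD n P c i * L^(i-1)),
    Finset.sum_range_succ (fun p => c p * L^p)]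
  have h0 : ((0:ℕ):ℝ) * gisD n P c 0 * L^(0-1) = 0 := by simp
  have htop : (1-(n:ℝ)) * (gisD n P c P * L^P) = c P * L^P := by
    have := gis_coeff n hn P c P le_rfl
    have he : gisD n P c (P+1) = 0 := by
      simp [gisD, Finset.Icc_eq_empty_of_lt (Nat.lt_succ_self P)]
    rw [he, mul_zero, add_zero] at this
    rw [← this]; ring
  rw [h0, add_zero, htop, add_right_comm]
  congr 1
  rw [← Finset.sum_add_distrib]
  refine Finset.sum_congr rfl fun i hi => ?_
  have hiP : i ≤ P := Nat.le_of_lt_succ ((Finset.mem_range.1 hi).trans_le (Nat.le_succ P))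
  have := gis_coeff n hn P c i hiP
  have he : (i+1) - 1 = i := by omega
  rw [he]
  push_cast
  calc (1-(n:ℝ)) * (gisD n P c i * L^i) + ((i:ℝ)+1) * gisD n P c (i+1) * L^i
      = ((1-(n:ℝ)) * gisD n P c i + ((i:ℝ)+1) * gisD n P c (i+1)) * L^i := by ring
    _ = c i * L^i := by rw [this]

lemma gis_deriv (n : ℕ) (hn : 2 ≤ n) (P : ℕ) (c : ℕ → ℝ) (R : ℝ) (hR : 0 < R) :
    HasDerivAt (fun R : ℝ =>
        R ^ (1 - (n:ℝ)) * ∑ i ∈ Finset.range (P+1), gisD n P c i * (Real.log R)^i)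
      ((∑ p ∈ Finset.range (P+1), c p * (Real.log R)^p) * R ^ (-(n:ℝ))) R := by
  have hlog := Real.hasDerivAt_log hR.ne'
  have hQ : HasDerivAt (fun R : ℝ => ∑ i ∈ Finset.range (P+1), gisD n P c i * (Real.log R)^i)
      (∑ i ∈ Finset.range (P+1), gisD n P c i * ((i:ℝ) * (Real.log R)^(i-1) * R⁻¹)) R :=
    HasDerivAt.fun_sum fun i _ => (hlog.pow i).const_mul (gisD n P c i)
  have hrp : HasDerivAt (fun x : ℝ => x ^ (1-(n:ℝ))) ((1-(n:ℝ)) * R ^ (1-(n:ℝ)-1)) R :=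
    Real.hasDerivAt_rpow_const (Or.inl hR.ne')
  have hmul := hrp.mul hQ
  refine hmul.congr_deriv ?_
  symm
  have e1 : R ^ (1-(n:ℝ)-1) = R ^ (-(n:ℝ)) := by rw [show (1-(n:ℝ)-1) = -(n:ℝ) from by ring]
  have e2 : R ^ (1-(n:ℝ)) * R⁻¹ = R ^ (-(n:ℝ)) := by
    rw [← Real.rpow_neg_one R, ← Real.rpow_add hR, show (1-(n:ℝ) + -1) = -(n:ℝ) from by ring]
  have e3 : ∑ i ∈ Finset.range (P+1), gisD n P c i * ((i:ℝ) * (Real.log R)^(i-1) * R⁻¹)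
      = (∑ i ∈ Finset.range (P+1), (i:ℝ) * gisD n P c i * (Real.log R)^(i-1)) * R⁻¹ := by
    rw [Finset.sum_mul]; exact Finset.sum_congr rfl fun i _ => by ring
  rw [e1, e3,
    show ∀ S Q : ℝ, (1-(n:ℝ)) * R ^ (-(n:ℝ)) * Q + R ^ (1-(n:ℝ)) * (S * R⁻¹)
        = (1-(n:ℝ)) * R ^ (-(n:ℝ)) * Q + S * (R ^ (1-(n:ℝ)) * R⁻¹) from fun S Q => by ring,
    e2, ← gis_sum n hn P c (Real.log R)]
  ring

lemma gis_rpow_mul_o {f : ℝ → ℝ} (s : ℝ) {t : ℝ} (h : f =o[atTop] fun R : ℝ => R ^ t) :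
    (fun R : ℝ => R ^ s * f R) =o[atTop] fun R : ℝ => R ^ (s + t) := by
  have h2 := (isBigO_refl (fun R : ℝ => R ^ s) atTop).mul_isLittleO h
  refine h2.congr' EventuallyEq.rfl ?_
  filter_upwards [eventually_gt_atTop 0] with x hx
  exact (Real.rpow_add hx s t).symm

lemma gis_tendsto_zero {f : ℝ → ℝ} {s : ℝ} (hs : s < 0)
    (h : f =o[atTop] fun R : ℝ => R ^ s) : Tendsto f atTop (nhds 0) := by
  have h2 := tendsto_rpow_neg_atTop (neg_pos.2 hs)
  rw [neg_neg] at h2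
  exact h.isBigO.trans_tendsto h2

lemma gis_log_pow_o (i : ℕ) {s : ℝ} (hs : 0 < s) :
    (fun x : ℝ => (Real.log x)^i) =o[atTop] fun x : ℝ => x ^ s := by
  have h := isLittleO_log_rpow_rpow_atTop (i : ℝ) hs
  refine h.congr' ?_ EventuallyEq.rfl
  filter_upwards [Real.tendsto_log_atTop.eventually_ge_atTop 0] with x hx
  exact Real.rpow_natCast (Real.log x) i

/-- Order-`n` induction step for all three fields with a general asymptotically flat wave
operator.  Let `n ≥ 2`, `P ∈ ℕ`, `c_0, …, c_P ∈ ℝ`, `ε, δ > 0`, `a > 1`.  If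
`v(R) := R^{1−n} w(R)` is continuously differentiable on `[a, ∞)` with
`v'(R) = Σ_{p=0}^{P} c_p (log R)^p R^{-n} + o(R^{-n-ε})` as `R → ∞`, and
`w(R) = o(R^{1−δ})`, then with `d_i := −Σ_{p=i}^{P} (p!/i!) c_p/(n−1)^{p−i+1}` one has
`w(R) − Σ_{i=0}^{P} d_i (log R)^i = o(R^{-ε})` as `R → ∞`. -/
theorem general_induction_step (n : ℕ) (hn : 2 ≤ n) (P : ℕ) (c : ℕ → ℝ) (ε δ a : ℝ)
    (hε : 0 < ε) (hδ : 0 < δ) (ha : 1 < a) (w v' : ℝ → ℝ)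
    (hv : ∀ R ∈ Ici a, HasDerivAt (fun R : ℝ => R ^ (1 - (n : ℝ)) * w R) (v' R) R)
    (hc : ContinuousOn v' (Ici a))
    (ho : (fun R : ℝ =>
        v' R - (∑ p ∈ Finset.range (P + 1), c p * (Real.log R) ^ p) * R ^ (-(n : ℝ)))
        =o[atTop] fun R : ℝ => R ^ (-(n : ℝ) - ε))
    (hw : w =o[atTop] fun R : ℝ => R ^ (1 - δ)) :
    (fun R : ℝ => w R - ∑ i ∈ Finset.range (P + 1),
        (-(∑ p ∈ Finset.Icc i P,
            (p.factorial : ℝ) / (i.factorial : ℝ) * c p / ((n : ℝ) - 1) ^ (p - i + 1))) *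
          (Real.log R) ^ i)
      =o[atTop] fun R : ℝ => R ^ (-ε) := by
  have ha0 : (0:ℝ) < a := lt_trans one_pos ha
  have hn2 : (2:ℝ) ≤ (n:ℝ) := by exact_mod_cast hn
  set Q : ℝ → ℝ := fun R => ∑ i ∈ Finset.range (P+1), gisD n P c i * (Real.log R)^i with hQdef
  set g : ℝ → ℝ := fun R => R ^ (1-(n:ℝ)) * w R - R ^ (1-(n:ℝ)) * Q R with hgdef
  set g' : ℝ → ℝ := fun R =>
    v' R - (∑ p ∈ Finset.range (P + 1), c p * (Real.log R) ^ p) * R ^ (-(n : ℝ)) with hg'def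
  have hgderiv : ∀ R ∈ Ici a, HasDerivAt g (g' R) R := by
    intro R hR
    have hRpos : 0 < R := lt_of_lt_of_le ha0 hR
    exact (hv R hR).sub (gis_deriv n hn P c R hRpos)
  -- continuity of g'
  have hlogcont : ContinuousOn Real.log (Ici a) :=
    Real.continuousOn_log.mono fun x hx => by
      simp only [mem_compl_iff, mem_singleton_iff]
      exact ne_of_gt (lt_of_lt_of_le ha0 hx)
  have hg'cont : ContinuousOn g' (Ici a) := by
    apply hc.sub
    apply ContinuousOn.mul
    · apply continuousOn_finset_sum
      intro p _
      exact (hlogcont.pow p).const_smul (c p) |>.congr fun x _ => by simp [smul_eq_mul]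
    · intro x hx
      exact (Real.continuousAt_rpow_const x _
        (Or.inl (ne_of_gt (lt_of_lt_of_le ha0 hx)))).continuousWithinAt
  -- g tends to 0
  have htend : Tendsto g atTop (nhds 0) := by
    have h1 : Tendsto (fun R : ℝ => R ^ (1-(n:ℝ)) * w R) atTop (nhds 0) :=
      gis_tendsto_zero (by linarith) (gis_rpow_mul_o (1-(n:ℝ)) hw)
    have h2 : Tendsto (fun R : ℝ => R ^ (1-(n:ℝ)) * Q R) atTop (nhds 0) := by
      have hsum : (fun R : ℝ => R ^ (1-(n:ℝ)) * Q R)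
          = fun R : ℝ => ∑ i ∈ Finset.range (P+1),
              gisD n P c i * (R ^ (1-(n:ℝ)) * (Real.log R)^i) := by
        funext R
        rw [hQdef, Finset.mul_sum]
        exact Finset.sum_congr rfl fun i _ => by ring
      rw [hsum]
      rw [show (0:ℝ) = ∑ i ∈ Finset.range (P+1), gisD n P c i * 0 from by simp]
      apply tendsto_finset_sum
      intro i _
      apply Tendsto.const_mul
      have hs : (0:ℝ) < ((n:ℝ)-1)/2 := by linarith
      have ho2 := gis_rpow_mul_o (1-(n:ℝ)) (gis_log_pow_o i hs)
      exact gis_tendsto_zero (by linarith) ho2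
    have := h1.sub h2
    rwa [sub_zero] at this
  -- key estimate
  have hk : (0:ℝ) < (n:ℝ) - 1 + ε := by linarith
  have hkey : g =o[atTop] fun R : ℝ => R ^ (1-(n:ℝ)-ε) := by
    rw [isLittleO_iff]
    intro C hC
    have hC' : 0 < C * ((n:ℝ)-1+ε) := mul_pos hC hk
    obtain ⟨R₀, hR₀⟩ := eventually_atTop.1 ((isLittleO_iff.1 ho) hC')
    filter_upwards [eventually_ge_atTop (max a R₀)] with R hRb
    have hRa : a ≤ R := le_trans (le_max_left _ _) hRb
    have hRR₀ : R₀ ≤ R := le_trans (le_max_right _ _) hRb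
    have hRpos : 0 < R := lt_of_lt_of_le ha0 hRa
    have hstep : ∀ S, R ≤ S → ‖g S - g R‖ ≤ C * R ^ (1-(n:ℝ)-ε) := by
      intro S hS
      have huIcc : uIcc R S = Icc R S := uIcc_of_le hS
      have hsub : Icc R S ⊆ Ici a := fun t ht => le_trans hRa ht.1
      have hint : IntervalIntegrable g' volume R S :=
        (hg'cont.mono (huIcc ▸ hsub)).intervalIntegrable
      have hftc : ∫ t in R..S, g' t = g S - g R :=
        intervalIntegral.integral_eq_sub_of_hasDerivAt
          (fun t ht => hgderiv t (hsub (huIcc ▸ ht))) hint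
      have hb_int : IntervalIntegrable
          (fun t : ℝ => (C*((n:ℝ)-1+ε)) * t ^ (-(n:ℝ)-ε)) volume R S := by
        apply IntervalIntegrable.const_mul
        apply intervalIntegral.intervalIntegrable_rpow
        right
        rw [huIcc]
        intro h0
        exact absurd (h0.1) (not_le.2 hRpos)
      have hbound : ‖∫ t in R..S, g' t‖
          ≤ |∫ t in R..S, (C*((n:ℝ)-1+ε)) * t ^ (-(n:ℝ)-ε)| := by
        refine (intervalIntegral.norm_integral_le_of_norm_le hS ?_ hb_int).trans (le_abs_self _)
        rw [← uIoc_of_le hS]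
        apply Filter.Eventually.of_forall
        intro t ht
        rw [uIoc_of_le hS] at ht
        have htR₀ : R₀ ≤ t := le_trans hRR₀ ht.1.le
        have htpos : 0 < t := lt_trans hRpos ht.1
        have := hR₀ t htR₀
        have hnt : ‖t‖ = t := by rw [Real.norm_eq_abs, abs_of_pos htpos]
        rwa [Real.norm_rpow_of_nonneg htpos.le, hnt] at this
      have hval : |∫ t in R..S, (C*((n:ℝ)-1+ε)) * t ^ (-(n:ℝ)-ε)|
          ≤ C * R ^ (1-(n:ℝ)-ε) := by
        rw [intervalIntegral.integral_const_mul, integral_rpow (Or.inr ⟨by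
            intro h; linarith, by
            rw [uIcc_of_le hS]; intro h0; exact absurd h0.1 (not_le.2 hRpos)⟩)]
        have he : (-(n:ℝ)-ε+1) = -((n:ℝ)-1+ε) := by ring
        rw [he, show (1-(n:ℝ)-ε) = -((n:ℝ)-1+ε) from by ring]
        have hSpos : 0 < S := lt_of_lt_of_le hRpos hS
        have hS' : 0 < S ^ (-((n:ℝ)-1+ε)) := Real.rpow_pos_of_pos hSpos _
        have hR' : 0 < R ^ (-((n:ℝ)-1+ε)) := Real.rpow_pos_of_pos hRpos _
        have hmono : S ^ (-((n:ℝ)-1+ε)) ≤ R ^ (-((n:ℝ)-1+ε)) := by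
          rw [Real.rpow_neg hRpos.le, Real.rpow_neg hSpos.le]
          exact inv_anti₀ (Real.rpow_pos_of_pos hRpos _)
            (Real.rpow_le_rpow hRpos.le hS hk.le)
        have habs : ∀ X Y : ℝ, C * ((n:ℝ)-1+ε) * ((Y - X) / (-((n:ℝ)-1+ε)))
            = C * (X - Y) := fun X Y => by
          have hkne : ((n:ℝ)-1+ε) ≠ 0 := ne_of_gt hk
          rw [div_neg, mul_neg, ← mul_div_assoc, ← neg_div,
            show -(C * ((n:ℝ)-1+ε) * (Y - X)) = ((n:ℝ)-1+ε) * (C * (X - Y)) from by ring,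
            mul_div_assoc, mul_div_cancel₀ _ hkne]
        rw [habs (R ^ (-((n:ℝ)-1+ε))) (S ^ (-((n:ℝ)-1+ε))),
          abs_of_nonneg (mul_nonneg hC.le (by linarith))]
        nlinarith
      calc ‖g S - g R‖ = ‖∫ t in R..S, g' t‖ := by rw [hftc]
        _ ≤ _ := hbound
        _ ≤ _ := hval
    have hnorm : Tendsto (fun S => ‖g S - g R‖) atTop (nhds ‖g R‖) := by
      have h1 := (htend.sub_const (g R)).norm
      rwa [zero_sub, norm_neg] at h1
    have hle : ‖g R‖ ≤ C * R ^ (1-(n:ℝ)-ε) :=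
      le_of_tendsto hnorm ((eventually_ge_atTop R).mono hstep)
    have hnR : ‖R ^ (1-(n:ℝ)-ε)‖ = R ^ (1-(n:ℝ)-ε) := by
      rw [Real.norm_eq_abs, abs_of_pos (Real.rpow_pos_of_pos hRpos _)]
    rw [hnR]
    exact hle
  -- conclude
  have hfin : (fun R : ℝ => R ^ ((n:ℝ)-1) * g R) =o[atTop] fun R : ℝ => R ^ (-ε) := by
    have h := gis_rpow_mul_o ((n:ℝ)-1) hkey
    rwa [show ((n:ℝ)-1)+(1-(n:ℝ)-ε) = -ε from by ring] at h
  refine hfin.congr' ?_ EventuallyEq.rfl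
  filter_upwards [eventually_ge_atTop a] with R hRa
  have hRpos : 0 < R := lt_of_lt_of_le ha0 hRa
  have hrr : R ^ ((n:ℝ)-1) * R ^ (1-(n:ℝ)) = 1 := by
    rw [← Real.rpow_add hRpos, show ((n:ℝ)-1)+(1-(n:ℝ)) = 0 from by ring, Real.rpow_zero]
  have heq : R ^ ((n:ℝ)-1) * g R = w R - Q R := by
    simp only [hgdef]
    calc R ^ ((n:ℝ)-1) * (R ^ (1-(n:ℝ)) * w R - R ^ (1-(n:ℝ)) * Q R)
        = (R ^ ((n:ℝ)-1) * R ^ (1-(n:ℝ))) * (w R - Q R) := by ring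
      _ = w R - Q R := by rw [hrr, one_mul]
  show R ^ ((n:ℝ)-1) * g R = _
  rw [heq]
  simp only [hQdef, gisD]
end

section
/- Let n ≥ 2 be an integer, ε > 0, a > 1, and let γ : ℝ³ → ℝ be analytic in a neighborhood of the origin with γ(0,0,0) = 0. For i = 1, 2, 3 let φ_i : ℝ → ℝ admit truncated polyhomogeneous expansions φ_i(R) = Σ_{m=1}^{n−1} Σ_{k=0}^{m} a^{(i)}_{m,k} (log R)^k R^{-m} + ρ_i(R) on [a, ∞), where a^{(i)}_{m,k} ∈ ℝ and ρ_i(R) = o(R^{-(n−1)-ε}) as R → ∞ (in particular each φ_i(R) → 0 as R → ∞). Then there exist real coefficients Γ_{m,k} (1 ≤ m ≤ n−1, 0 ≤ k ≤ m) and ε' > 0 such that, as R → ∞, γ(φ_1(R), φ_2(R), φ_3(R)) = Σ_{m=1}^{n−1} Σ_{k=0}^{m} Γ_{m,k} (log R)^k R^{-m} + o(R^{-(n−1)-ε'}). (Any analytic function of the three evolved fields that vanishes at null infinity inherits a truncated polyhomogeneous expansion of the same form; this is the key fact used for the metric functions γ(g,b,u) of an asymptotically flat metric.) -/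
open Filter MeasureTheory Set Asymptotics Topology

/-- The truncated polyhomogeneous main part. -/
noncomputable def phMain (n : ℕ) (Γ : ℕ → ℕ → ℝ) (R : ℝ) : ℝ :=
  ∑ m ∈ Finset.Icc 1 (n - 1), ∑ k ∈ Finset.range (m + 1),
    Γ m k * (Real.log R) ^ k * R ^ (-(m : ℝ))

/-- The class of functions with a truncated polyhomogeneous expansion. -/
def PH (n : ℕ) (f : ℝ → ℝ) : Prop :=
  ∃ Γ : ℕ → ℕ → ℝ, ∃ ε' > (0 : ℝ),
    (fun R : ℝ => f R - phMain n Γ R) =o[atTop] fun R : ℝ => R ^ (-((n : ℝ) - 1) - ε')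

theorem rpow_isBigO_rpow {s t : ℝ} (h : s ≤ t) :
    (fun R : ℝ => R ^ s) =O[atTop] fun R : ℝ => R ^ t := by
  apply IsBigO.of_bound 1
  filter_upwards [eventually_ge_atTop (1 : ℝ)] with R hR
  have h0 : (0:ℝ) ≤ R := le_trans zero_le_one hR
  rw [Real.norm_eq_abs, Real.norm_eq_abs, abs_of_nonneg (Real.rpow_nonneg h0 _),
    abs_of_nonneg (Real.rpow_nonneg h0 _), one_mul]
  exact Real.rpow_le_rpow_of_exponent_le hR h

theorem logpow_littleO (k : ℕ) {m s : ℝ} (h : -m < s) :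
    (fun R : ℝ => Real.log R ^ k * R ^ (-m)) =o[atTop] fun R : ℝ => R ^ s := by
  have ht : 0 < s + m := by linarith
  have hk : (fun R : ℝ => Real.log R ^ k) =o[atTop] fun R : ℝ => R ^ (s + m) := by
    rcases Nat.eq_zero_or_pos k with hk0 | hk0
    · subst hk0
      simp only [pow_zero]
      rw [isLittleO_const_left]
      refine Or.inr ?_
      have := tendsto_rpow_atTop ht
      exact tendsto_abs_atTop_atTop.comp this
    · have h1 : (0:ℝ) < (s + m) / k := by positivity
      have h2 := (isLittleO_log_rpow_atTop h1).pow hk0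
      refine h2.congr' (by rfl) ?_
      filter_upwards [eventually_ge_atTop (0 : ℝ)] with R hR
      rw [← Real.rpow_natCast (R ^ ((s+m)/k)) k, ← Real.rpow_mul hR]
      congr 1
      field_simp
  have h2 := hk.mul_isBigO (isBigO_refl (fun R : ℝ => R ^ (-m)) atTop)
  refine h2.congr' (by rfl) ?_
  filter_upwards [eventually_gt_atTop (0 : ℝ)] with R hR
  rw [← Real.rpow_add hR]
  congr 1
  ring
theorem PH_congr_ev {n : ℕ} {f g : ℝ → ℝ} (h : f =ᶠ[atTop] g) (hf : PH n f) : PH n g := by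
  obtain ⟨Γ, ε', hε', ho⟩ := hf
  exact ⟨Γ, ε', hε', ho.congr' (by filter_upwards [h] with R hR; rw [hR]) (by rfl)⟩

theorem PH_zero {n : ℕ} : PH n (fun _ => (0 : ℝ)) := by
  refine ⟨fun _ _ => 0, 1, one_pos, ?_⟩
  have : (fun R : ℝ => (0:ℝ) - phMain n (fun _ _ => 0) R) = fun _ => (0:ℝ) := by
    funext R; simp [phMain]
  rw [this]
  exact isLittleO_zero _ _

theorem PH_of_small {n : ℕ} {f : ℝ → ℝ} {ε' : ℝ} (hε' : 0 < ε')
    (h : f =o[atTop] fun R : ℝ => R ^ (-((n : ℝ) - 1) - ε')) : PH n f := by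
  refine ⟨fun _ _ => 0, ε', hε', ?_⟩
  refine h.congr' ?_ (by rfl)
  filter_upwards with R
  simp [phMain]

theorem PH_add {n : ℕ} {f g : ℝ → ℝ} (hf : PH n f) (hg : PH n g) :
    PH n (fun R => f R + g R) := by
  obtain ⟨Γ₁, ε₁, hε₁, h₁⟩ := hf
  obtain ⟨Γ₂, ε₂, hε₂, h₂⟩ := hg
  refine ⟨fun m k => Γ₁ m k + Γ₂ m k, min ε₁ ε₂, lt_min hε₁ hε₂, ?_⟩
  have hM : ∀ R : ℝ, phMain n (fun m k => Γ₁ m k + Γ₂ m k) R = phMain n Γ₁ R + phMain n Γ₂ R := by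
    intro R; simp [phMain, add_mul, Finset.sum_add_distrib]
  have e1 : (fun R : ℝ => (f R + g R) - phMain n (fun m k => Γ₁ m k + Γ₂ m k) R)
      = fun R => (f R - phMain n Γ₁ R) + (g R - phMain n Γ₂ R) := by
    funext R; rw [hM]; ring
  rw [e1]
  have b1 : (fun R : ℝ => f R - phMain n Γ₁ R) =o[atTop]
      fun R : ℝ => R ^ (-((n : ℝ) - 1) - min ε₁ ε₂) :=
    h₁.trans_isBigO (rpow_isBigO_rpow (by have := min_le_left ε₁ ε₂; linarith))
  have b2 : (fun R : ℝ => g R - phMain n Γ₂ R) =o[atTop]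
      fun R : ℝ => R ^ (-((n : ℝ) - 1) - min ε₁ ε₂) :=
    h₂.trans_isBigO (rpow_isBigO_rpow (by have := min_le_right ε₁ ε₂; linarith))
  exact b1.add b2

theorem PH_const_mul {n : ℕ} {f : ℝ → ℝ} (c : ℝ) (hf : PH n f) :
    PH n (fun R => c * f R) := by
  obtain ⟨Γ, ε', hε', h⟩ := hf
  refine ⟨fun m k => c * Γ m k, ε', hε', ?_⟩
  have e1 : (fun R : ℝ => c * f R - phMain n (fun m k => c * Γ m k) R)
      = fun R => c * (f R - phMain n Γ R) := by
    funext R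
    simp only [phMain, Finset.mul_sum, mul_sub]
    congr 1
    refine Finset.sum_congr rfl fun m _ => Finset.sum_congr rfl fun k _ => by ring
  rw [e1]
  exact h.const_mul_left c

theorem phMain_single {n m k : ℕ} (hm : m ∈ Finset.Icc 1 (n - 1)) (hk : k ≤ m) (b : ℝ) (R : ℝ) :
    phMain n (fun m' k' => if m' = m ∧ k' = k then b else 0) R
      = b * Real.log R ^ k * R ^ (-(m : ℝ)) := by
  rw [phMain, Finset.sum_eq_single m ?_ ?_]
  · rw [Finset.sum_eq_single k ?_ ?_]
    · simp
    · intro k' _ hk'; simp [hk']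
    · intro h; exact absurd (Finset.mem_range.2 (Nat.lt_succ_of_le hk)) h
  · intro m' _ hm'
    apply Finset.sum_eq_zero
    intro k' _
    simp [hm']
  · intro h; exact absurd hm h

theorem PH_term {n m k : ℕ} (hn : 2 ≤ n) (hm : 1 ≤ m) (hk : k ≤ m) (b : ℝ) :
    PH n (fun R : ℝ => b * Real.log R ^ k * R ^ (-(m : ℝ))) := by
  by_cases hmn : m ≤ n - 1
  · refine ⟨fun m' k' => if m' = m ∧ k' = k then b else 0, 1, one_pos, ?_⟩
    have e1 : (fun R : ℝ => b * Real.log R ^ k * R ^ (-(m : ℝ))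
        - phMain n (fun m' k' => if m' = m ∧ k' = k then b else 0) R) = fun _ => (0:ℝ) := by
      funext R
      rw [phMain_single (Finset.mem_Icc.2 ⟨hm, hmn⟩) hk]
      ring
    rw [e1]
    exact isLittleO_zero _ _
  · push_neg at hmn
    have hmn' : n ≤ m := by omega
    refine PH_of_small (ε' := 1/2) (by norm_num) ?_
    have hlt : -(m : ℝ) < -((n : ℝ) - 1) - 1/2 := by
      have : (n : ℝ) ≤ (m : ℝ) := by exact_mod_cast hmn'
      linarith
    have := (logpow_littleO k hlt).const_mul_left b
    simpa [mul_assoc] using this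

theorem PH_sum {n : ℕ} {ι : Type*} (s : Finset ι) (f : ι → ℝ → ℝ)
    (h : ∀ i ∈ s, PH n (f i)) : PH n (fun R => ∑ i ∈ s, f i R) := by
  classical
  induction s using Finset.cons_induction with
  | empty => simpa using (PH_zero (n := n))
  | cons i s hi ih =>
    simp only [Finset.sum_cons]
    exact PH_add (h i (Finset.mem_cons_self i s))
      (ih fun j hj => h j (Finset.mem_cons_of_mem hj))
theorem PH_isLittleO {n : ℕ} {f : ℝ → ℝ} (hn : 2 ≤ n) (hf : PH n f) {s : ℝ} (hs : -1 < s) :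
    f =o[atTop] fun R : ℝ => R ^ s := by
  obtain ⟨Γ, ε', hε', h⟩ := hf
  have hM : phMain n Γ =o[atTop] fun R : ℝ => R ^ s := by
    unfold phMain
    apply IsLittleO.fun_sum; intro m hm
    apply IsLittleO.fun_sum; intro k hk
    have hm1 : 1 ≤ m := (Finset.mem_Icc.1 hm).1
    have hlt : -(m : ℝ) < s := by
      have : (1:ℝ) ≤ (m:ℝ) := by exact_mod_cast hm1
      linarith
    simpa [mul_assoc] using (logpow_littleO k hlt).const_mul_left (Γ m k)
  have hr : (fun R : ℝ => f R - phMain n Γ R) =o[atTop] fun R : ℝ => R ^ s := by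
    refine h.trans_isBigO (rpow_isBigO_rpow ?_)
    have : (2:ℝ) ≤ (n:ℝ) := by exact_mod_cast hn
    linarith
  have := hr.add hM
  refine this.congr' ?_ (by rfl)
  filter_upwards with R; ring

theorem PH_tendsto_zero {n : ℕ} {f : ℝ → ℝ} (hn : 2 ≤ n) (hf : PH n f) :
    Tendsto f atTop (𝓝 0) := by
  have h := PH_isLittleO hn hf (s := -(1/2 : ℝ)) (by norm_num)
  exact h.trans_tendsto (by simpa using tendsto_rpow_neg_atTop (y := (1/2:ℝ)) (by norm_num))

theorem PH_mul {n : ℕ} {f g : ℝ → ℝ} (hn : 2 ≤ n) (hf : PH n f) (hg : PH n g) :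
    PH n (fun R => f R * g R) := by
  obtain ⟨Γ₁, ε₁, hε₁, h₁⟩ := hf
  obtain ⟨Γ₂, ε₂, hε₂, h₂⟩ := hg
  -- the product of the main parts is PH
  have hMM : PH n (fun R => phMain n Γ₁ R * phMain n Γ₂ R) := by
    have e1 : (fun R => phMain n Γ₁ R * phMain n Γ₂ R)
        = fun R => ∑ m ∈ Finset.Icc 1 (n-1), ∑ k ∈ Finset.range (m+1),
            ∑ m' ∈ Finset.Icc 1 (n-1), ∑ k' ∈ Finset.range (m'+1),
              (Γ₁ m' k' * Real.log R ^ k' * R ^ (-(m':ℝ))) *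
              (Γ₂ m k * Real.log R ^ k * R ^ (-(m:ℝ))) := by
      funext R
      simp only [phMain, Finset.sum_mul, Finset.mul_sum]
    rw [e1]
    apply PH_sum; intro m hm
    apply PH_sum; intro k hk
    apply PH_sum; intro m' hm'
    apply PH_sum; intro k' hk'
    have hm1 : 1 ≤ m := (Finset.mem_Icc.1 hm).1
    have hm'1 : 1 ≤ m' := (Finset.mem_Icc.1 hm').1
    have hk1 : k ≤ m := Nat.lt_succ_iff.1 (Finset.mem_range.1 hk)
    have hk'1 : k' ≤ m' := Nat.lt_succ_iff.1 (Finset.mem_range.1 hk')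
    have base := PH_term (n := n) (m := m + m') (k := k + k') hn (by omega) (by omega)
      (Γ₁ m' k' * Γ₂ m k)
    refine PH_congr_ev ?_ base
    filter_upwards [eventually_gt_atTop (0 : ℝ)] with R hR
    have : R ^ (-((m + m' : ℕ) : ℝ)) = R ^ (-(m:ℝ)) * R ^ (-(m':ℝ)) := by
      rw [← Real.rpow_add hR]; push_cast; ring_nf
    rw [this, pow_add]
    ring
  -- the cross terms are small
  have hfO : f =O[atTop] (fun _ : ℝ => (1:ℝ)) :=
    (PH_tendsto_zero hn ⟨Γ₁, ε₁, hε₁, h₁⟩).isBigO_one ℝ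
  have hgO : g =O[atTop] (fun _ : ℝ => (1:ℝ)) :=
    (PH_tendsto_zero hn ⟨Γ₂, ε₂, hε₂, h₂⟩).isBigO_one ℝ
  have hM1O : (fun R => phMain n Γ₁ R) =O[atTop] (fun _ : ℝ => (1:ℝ)) := by
    have : (fun R => phMain n Γ₁ R) = fun R => f R - (f R - phMain n Γ₁ R) := by
      funext R; ring
    rw [this]
    exact hfO.sub ((h₁.trans_tendsto (by
      have h3 : (0:ℝ) < (n:ℝ) - 1 + ε₁ := by
        have : (2:ℝ) ≤ (n:ℝ) := by exact_mod_cast hn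
        linarith
      have h4 := tendsto_rpow_neg_atTop h3
      have h5 : -((n:ℝ) - 1 + ε₁) = -((n:ℝ) - 1) - ε₁ := by ring
      rw [h5] at h4
      exact h4)).isBigO_one ℝ)
  set ε₃ := min ε₁ ε₂ with hε₃
  have hε₃p : 0 < ε₃ := lt_min hε₁ hε₂
  have hsmall : (fun R => f R * g R - phMain n Γ₁ R * phMain n Γ₂ R) =o[atTop]
      fun R : ℝ => R ^ (-((n : ℝ) - 1) - ε₃) := by
    have e2 : (fun R => f R * g R - phMain n Γ₁ R * phMain n Γ₂ R)
        = fun R => (f R - phMain n Γ₁ R) * g R + phMain n Γ₁ R * (g R - phMain n Γ₂ R) := by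
      funext R; ring
    rw [e2]
    have t1 : (fun R => (f R - phMain n Γ₁ R) * g R) =o[atTop]
        fun R : ℝ => R ^ (-((n : ℝ) - 1) - ε₃) := by
      have := h₁.mul_isBigO hgO
      refine (this.congr' (by rfl) (by filter_upwards with R; rw [mul_one])).trans_isBigO
        (rpow_isBigO_rpow (by have := min_le_left ε₁ ε₂; simp only [hε₃]; linarith))
    have t2 : (fun R => phMain n Γ₁ R * (g R - phMain n Γ₂ R)) =o[atTop]
        fun R : ℝ => R ^ (-((n : ℝ) - 1) - ε₃) := by
      have := hM1O.mul_isLittleO h₂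
      refine (this.congr' (by rfl) (by filter_upwards with R; rw [one_mul])).trans_isBigO
        (rpow_isBigO_rpow (by have := min_le_right ε₁ ε₂; simp only [hε₃]; linarith))
    exact t1.add t2
  have := PH_add hMM (PH_of_small hε₃p hsmall)
  refine PH_congr_ev ?_ this
  filter_upwards with R; ring
theorem PH_prod {n : ℕ} (hn : 2 ≤ n) : ∀ (j : ℕ) (f : Fin (j + 1) → ℝ → ℝ),
    (∀ i, PH n (f i)) → PH n (fun R => ∏ i, f i R)
  | 0, f, h => by simpa using h 0
  | (j + 1), f, h => by
    have e : (fun R => ∏ i : Fin (j + 2), f i R)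
        = fun R => f 0 R * ∏ i : Fin (j + 1), f i.succ R :=
      funext fun R => Fin.prod_univ_succ _
    rw [e]
    exact PH_mul hn (h 0) (PH_prod hn j (fun i => f i.succ) fun i => h i.succ)

/-- Any analytic function `γ(g,b,u)` of the three evolved fields, vanishing at the origin
(i.e. at null infinity), inherits a truncated polyhomogeneous expansion of the same form:
if each `φ_i` admits a truncated polyhomogeneous expansion to order `n−1` with at most `m`
powers of `log R` at order `R^{-m}`, then so does `R ↦ γ(φ₁(R), φ₂(R), φ₃(R))`. -/
theorem analytic_inherits_polyhomogeneous (n : ℕ) (hn : 2 ≤ n) (ε a : ℝ)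
    (hε : 0 < ε) (ha : 1 < a)
    (γ : ℝ × ℝ × ℝ → ℝ) (hγ : AnalyticAt ℝ γ (0, 0, 0)) (hγ0 : γ (0, 0, 0) = 0)
    (φ₁ φ₂ φ₃ : ℝ → ℝ) (a₁ a₂ a₃ : ℕ → ℕ → ℝ) (ρ₁ ρ₂ ρ₃ : ℝ → ℝ)
    (h₁ : ∀ R ∈ Ici a, φ₁ R =
      (∑ m ∈ Finset.Icc 1 (n - 1), ∑ k ∈ Finset.range (m + 1),
        a₁ m k * (Real.log R) ^ k * R ^ (-(m : ℝ))) + ρ₁ R)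
    (h₂ : ∀ R ∈ Ici a, φ₂ R =
      (∑ m ∈ Finset.Icc 1 (n - 1), ∑ k ∈ Finset.range (m + 1),
        a₂ m k * (Real.log R) ^ k * R ^ (-(m : ℝ))) + ρ₂ R)
    (h₃ : ∀ R ∈ Ici a, φ₃ R =
      (∑ m ∈ Finset.Icc 1 (n - 1), ∑ k ∈ Finset.range (m + 1),
        a₃ m k * (Real.log R) ^ k * R ^ (-(m : ℝ))) + ρ₃ R)
    (hρ₁ : ρ₁ =o[atTop] fun R : ℝ => R ^ (-((n : ℝ) - 1) - ε))
    (hρ₂ : ρ₂ =o[atTop] fun R : ℝ => R ^ (-((n : ℝ) - 1) - ε))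
    (hρ₃ : ρ₃ =o[atTop] fun R : ℝ => R ^ (-((n : ℝ) - 1) - ε)) :
    ∃ Γ : ℕ → ℕ → ℝ, ∃ ε' > (0 : ℝ),
      (fun R : ℝ => γ (φ₁ R, φ₂ R, φ₃ R) -
          ∑ m ∈ Finset.Icc 1 (n - 1), ∑ k ∈ Finset.range (m + 1),
            Γ m k * (Real.log R) ^ k * R ^ (-(m : ℝ)))
        =o[atTop] fun R : ℝ => R ^ (-((n : ℝ) - 1) - ε') := by
  obtain ⟨p, hp⟩ := hγ
  set φv : ℝ → ℝ × ℝ × ℝ := fun R => (φ₁ R, φ₂ R, φ₃ R) with hφvdef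
  -- the three fields belong to the class PH
  have hPH1 : PH n φ₁ := by
    refine ⟨a₁, ε, hε, ?_⟩
    refine hρ₁.congr' ?_ (by rfl)
    filter_upwards [eventually_ge_atTop a] with R hR
    rw [h₁ R (mem_Ici.2 hR)]
    simp only [phMain]; ring
  have hPH2 : PH n φ₂ := by
    refine ⟨a₂, ε, hε, ?_⟩
    refine hρ₂.congr' ?_ (by rfl)
    filter_upwards [eventually_ge_atTop a] with R hR
    rw [h₂ R (mem_Ici.2 hR)]
    simp only [phMain]; ring
  have hPH3 : PH n φ₃ := by
    refine ⟨a₃, ε, hε, ?_⟩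
    refine hρ₃.congr' ?_ (by rfl)
    filter_upwards [eventually_ge_atTop a] with R hR
    rw [h₃ R (mem_Ici.2 hR)]
    simp only [phMain]; ring
  set c : Fin 3 → ℝ → ℝ := ![φ₁, φ₂, φ₃] with hcdef
  set e : Fin 3 → ℝ × ℝ × ℝ := ![(1, 0, 0), (0, 1, 0), (0, 0, 1)] with hedef
  have hPHc : ∀ j : Fin 3, PH n (c j) := by
    intro j
    fin_cases j
    · simpa [hcdef] using hPH1
    · simpa [hcdef] using hPH2
    · simpa [hcdef] using hPH3
  have hφv : ∀ R, φv R = ∑ j : Fin 3, c j R • e j := by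
    intro R
    simp [hφvdef, hcdef, hedef, Fin.sum_univ_three, Prod.ext_iff]
  -- tendsto zero
  have hφt : Tendsto φv atTop (𝓝 (0, 0, 0)) :=
    (PH_tendsto_zero hn hPH1).prodMk_nhds
      ((PH_tendsto_zero hn hPH2).prodMk_nhds (PH_tendsto_zero hn hPH3))
  -- Taylor remainder is small
  have hB := (hp.isBigO_sub_partialSum_pow n).comp_tendsto hφt
  have hB' : (fun R => γ (φ₁ R, φ₂ R, φ₃ R) - p.partialSum n (φv R)) =O[atTop]
      fun R => ‖φv R‖ ^ n := by
    refine hB.congr' ?_ ?_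
    · filter_upwards with R
      simp [Function.comp, hφvdef]
    · filter_upwards with R
      simp [Function.comp]
  have hnpos : (0:ℝ) < (n:ℝ) := by positivity
  have hδpos : (0:ℝ) < 1 / (2 * (n:ℝ)) := by positivity
  have hδlt : (-1 : ℝ) < -1 + 1 / (2 * (n:ℝ)) := by linarith
  have hnorm : (fun R => ‖φv R‖) =o[atTop] fun R : ℝ => R ^ (-1 + 1 / (2 * (n:ℝ))) := by
    have o1 := (PH_isLittleO hn hPH1 hδlt).abs_left
    have o2 := (PH_isLittleO hn hPH2 hδlt).abs_left
    have o3 := (PH_isLittleO hn hPH3 hδlt).abs_left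
    have hsum := (o1.add o2).add o3
    have hO : (fun R => ‖φv R‖) =O[atTop]
        fun R => |φ₁ R| + |φ₂ R| + |φ₃ R| := by
      apply IsBigO.of_bound 1
      filter_upwards with R
      have hb : ‖φv R‖ ≤ |φ₁ R| + |φ₂ R| + |φ₃ R| := by
        rw [hφvdef]
        simp only [Prod.norm_def, Real.norm_eq_abs]
        have p1 := abs_nonneg (φ₁ R)
        have p2 := abs_nonneg (φ₂ R)
        have p3 := abs_nonneg (φ₃ R)
        apply max_le (by linarith)
        exact max_le (by linarith) (by linarith)
      rw [one_mul, Real.norm_eq_abs, Real.norm_eq_abs,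
        abs_of_nonneg (norm_nonneg _), abs_of_nonneg (by positivity)]
      exact hb
    exact hO.trans_isLittleO hsum
  have hpow : (fun R => ‖φv R‖ ^ n) =o[atTop]
      fun R : ℝ => R ^ (-((n:ℝ) - 1) - 1/2) := by
    have hpw := hnorm.pow (n := n) (by omega)
    refine hpw.congr' (by rfl) ?_
    filter_upwards [eventually_ge_atTop (0:ℝ)] with R hR
    rw [← Real.rpow_natCast (R ^ (-1 + 1 / (2 * (n:ℝ)))) n, ← Real.rpow_mul hR]
    congr 1
    have hn0 : (n:ℝ) ≠ 0 := ne_of_gt hnpos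
    field_simp
    ring
  have hrem : PH n (fun R => γ (φ₁ R, φ₂ R, φ₃ R) - p.partialSum n (φv R)) :=
    PH_of_small (ε' := 1/2) (by norm_num) (hB'.trans_isLittleO hpow)
  -- the partial sum composed with φ is PH
  have hPS : PH n (fun R => p.partialSum n (φv R)) := by
    have e1 : (fun R => p.partialSum n (φv R))
        = fun R => ∑ m ∈ Finset.range n, (p m fun _ => φv R) := rfl
    rw [e1]
    apply PH_sum
    intro m _
    match m with
    | 0 =>
      have e0 : (fun R => (p 0 fun _ => φv R)) = fun _ => (0:ℝ) := by
        funext R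
        rw [hp.coeff_zero]
        exact hγ0
      rw [e0]
      exact PH_zero
    | (j + 1) =>
      have e2 : ∀ R, (p (j+1) fun _ => φv R)
          = ∑ r : Fin (j+1) → Fin 3, (∏ i, c (r i) R) * (p (j+1) fun i => e (r i)) := by
        intro R
        rw [hφv R]
        rw [(p (j+1)).map_sum (g := fun _ j => c j R • e j)]
        refine Finset.sum_congr rfl fun r _ => ?_
        rw [(p (j+1)).map_smul_univ (fun i => c (r i) R) (fun i => e (r i))]
        rw [smul_eq_mul]
      have e3 : (fun R => (p (j+1) fun _ => φv R))
          = fun R => ∑ r : Fin (j+1) → Fin 3,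
              (∏ i, c (r i) R) * (p (j+1) fun i => e (r i)) := funext e2
      rw [e3]
      apply PH_sum
      intro r _
      have hprod : PH n (fun R => ∏ i : Fin (j+1), c (r i) R) :=
        PH_prod hn j _ fun i => hPHc (r i)
      have hcm := PH_const_mul (p (j+1) fun i => e (r i)) hprod
      refine PH_congr_ev ?_ hcm
      filter_upwards with R
      ring
  have final : PH n (fun R => γ (φ₁ R, φ₂ R, φ₃ R)) := by
    have hadd := PH_add hPS hrem
    refine PH_congr_ev ?_ hadd
    filter_upwards with R
    ring
  obtain ⟨Γ, ε', hε', ho⟩ := final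
  exact ⟨Γ, ε', hε', ho⟩
end
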